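/- With Φ_α(Z,U) = det of the matrix formed by the first n+1−α rows of the generic upper unitriangular (n+1)×(n+1) matrix Z and the first α rows of U^{ext} (the generic n×n unipotent matrix U extended by a zero column), we have ∂Φ_α/∂z_{1(n+1)} = R_{1α}^u Ψ_{α−1} for 2 ≤ α ≤ n, and ∂Φ_1/∂z_{1(n+1)} = −1, where Ψ_{α−1} is the determinant of the first n−α+1 rows of Z^{cut} stacked on the first α−1 rows of U, and R^u is the Zhelobenko operator in the u-variables. -/

import Mathlib

open MvPolynomial

/-- Polynomials in two families of variables: the entries `z_{ij}` (left summand,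
1-based) of the generic upper unitriangular `(n+1) × (n+1)` matrix `Z`, and the
entries `u_{kl}` (right summand, 1-based) of the generic upper unitriangular
`n × n` matrix `U`. -/
abbrev Pzu : Type := MvPolynomial ((ℕ × ℕ) ⊕ (ℕ × ℕ)) ℂ

/-- The variable `z_{ij}`. -/
noncomputable def zv (i j : ℕ) : Pzu := X (Sum.inl (i, j))

/-- The variable `u_{ij}`. -/
noncomputable def uv (i j : ℕ) : Pzu := X (Sum.inr (i, j))

/-- The `j`-th entry of the `i`-th row (1-based) of the generic upper
unitriangular matrix `Z`. -/
noncomputable def Zrow (i j : ℕ) : Pzu :=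
  if i = j then 1 else if i < j then zv i j else 0

/-- The `j`-th entry of the `i`-th row (1-based) of the generic upper
unitriangular matrix `U`. -/
noncomputable def Urow (i j : ℕ) : Pzu :=
  if i = j then 1 else if i < j then uv i j else 0

/-- The `i`-th row of `U^{ext}`, i.e. of `U` with a zero `(n+1)`-st column
appended. -/
noncomputable def UextRow (n i j : ℕ) : Pzu :=
  if j ≤ n then Urow i j else 0

/-- The Zhelobenko operator `R^u_{kl} = ∂/∂u_{kl} + ∑_{j>l} u_{lj} ∂/∂u_{kj}`
in the `u`-variables (which range over `1 ≤ i < j ≤ n`). -/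
noncomputable def Ru (n k l : ℕ) (p : Pzu) : Pzu :=
  pderiv (Sum.inr (k, l)) p +
    ∑ j ∈ Finset.Icc (l + 1) n, uv l j * pderiv (Sum.inr (k, j)) p

/-- The Zhelobenko operator `R^z_{kl} = ∂/∂z_{kl} + ∑_{j>l} z_{lj} ∂/∂z_{kj}`
in the `z`-variables (which range over `1 ≤ i < j ≤ n+1`). -/
noncomputable def Rz (n k l : ℕ) (p : Pzu) : Pzu :=
  pderiv (Sum.inl (k, l)) p +
    ∑ j ∈ Finset.Icc (l + 1) (n + 1), zv l j * pderiv (Sum.inl (k, j)) p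

/-- `Φ_α`: the determinant of the `(n+1) × (n+1)` matrix whose rows are the
first `n+1−α` rows of `Z` followed by the first `α` rows of `U^{ext}`. -/
noncomputable def Phi (n α : ℕ) : Pzu :=
  Matrix.det (Matrix.of fun a b : Fin (n + 1) =>
    if (a : ℕ) + 1 ≤ n + 1 - α then Zrow ((a : ℕ) + 1) ((b : ℕ) + 1)
    else UextRow n ((a : ℕ) + 1 - (n + 1 - α)) ((b : ℕ) + 1))

/-- `Ψ_α`: the determinant of the `n × n` matrix whose rows are the first `n−α`
rows of `Z^{cut}` (`Z` with its last column deleted) followed by the first `α`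
rows of `U`. -/
noncomputable def Psi (n α : ℕ) : Pzu :=
  Matrix.det (Matrix.of fun a b : Fin n =>
    if (a : ℕ) + 1 ≤ n - α then Zrow ((a : ℕ) + 1) ((b : ℕ) + 1)
    else Urow ((a : ℕ) + 1 - (n - α)) ((b : ℕ) + 1))

lemma pderiv_finset_prod {ι : Type*} [DecidableEq ι] (v : (ℕ × ℕ) ⊕ (ℕ × ℕ)) (s : Finset ι)
    (f : ι → Pzu) :
    pderiv v (∏ i ∈ s, f i) = ∑ i ∈ s, (∏ j ∈ s.erase i, f j) * pderiv v (f i) := by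
  induction s using Finset.induction_on with
  | empty => simp
  | @insert a s ha ih =>
    rw [Finset.prod_insert ha, pderiv_mul, ih, Finset.sum_insert ha, Finset.erase_insert ha]
    simp only [Finset.mul_sum]
    congr 1
    · exact mul_comm _ _
    · refine Finset.sum_congr rfl fun i hi => ?_
      rw [Finset.erase_insert_of_ne (by rintro rfl; exact ha hi), Finset.prod_insert
        (fun h => ha (Finset.mem_of_mem_erase h))]
      ring

lemma pderiv_det {k : ℕ} (v : (ℕ × ℕ) ⊕ (ℕ × ℕ)) (M : Matrix (Fin k) (Fin k) Pzu) :
    pderiv v M.det = ∑ j, (M.updateCol j fun i => pderiv v (M i j)).det := by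
  rw [Matrix.det_apply, map_sum]
  have h1 : ∀ σ : Equiv.Perm (Fin k),
      pderiv v (Equiv.Perm.sign σ • ∏ i, M (σ i) i)
        = ∑ j, Equiv.Perm.sign σ •
            ((∏ i ∈ Finset.univ.erase j, M (σ i) i) * pderiv v (M (σ j) j)) := by
    intro σ
    rw [Units.smul_def, map_zsmul, pderiv_finset_prod, Finset.smul_sum]
    simp [Units.smul_def]
  rw [Finset.sum_congr rfl fun σ _ => h1 σ, Finset.sum_comm]
  refine Finset.sum_congr rfl fun j _ => ?_
  rw [Matrix.det_apply]
  refine Finset.sum_congr rfl fun σ _ => ?_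
  congr 1
  rw [← Finset.mul_prod_erase _ _ (Finset.mem_univ j), Matrix.updateCol_self, mul_comm]
  congr 1
  refine Finset.prod_congr rfl fun i hi => ?_
  rw [Matrix.updateCol_ne (Finset.ne_of_mem_erase hi)]

lemma pderiv_det_row {k : ℕ} (v : (ℕ × ℕ) ⊕ (ℕ × ℕ)) (M : Matrix (Fin k) (Fin k) Pzu) :
    pderiv v M.det = ∑ i, (M.updateRow i fun j => pderiv v (M i j)).det := by
  rw [← Matrix.det_transpose M, pderiv_det]
  refine Finset.sum_congr rfl fun i _ => ?_
  rw [← Matrix.det_transpose (M.updateRow i _)]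
  congr 1
  ext a b
  by_cases hb : b = i <;>
    simp [Matrix.updateCol_apply, Matrix.updateRow_apply, Matrix.transpose_apply, hb]

lemma det_updateRow_sum' {k : ℕ} {ι : Type*} [DecidableEq ι] (A : Matrix (Fin k) (Fin k) Pzu)
    (r : Fin k) (s : Finset ι) (g : ι → Fin k → Pzu) :
    (A.updateRow r (fun b => ∑ j ∈ s, g j b)).det = ∑ j ∈ s, (A.updateRow r (g j)).det := by
  induction s using Finset.induction_on with
  | empty =>
    simp only [Finset.sum_empty]
    exact Matrix.det_eq_zero_of_row_eq_zero r fun j => by simp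
  | @insert a s ha ih =>
    simp only [Finset.sum_insert ha]
    rw [show (fun b => g a b + ∑ j ∈ s, g j b) = (g a + fun b => ∑ j ∈ s, g j b) from rfl,
      Matrix.det_updateRow_add, ih]

lemma pd_inr_Zrow (w : ℕ × ℕ) (i j : ℕ) : pderiv (Sum.inr w) (Zrow i j) = 0 := by
  unfold Zrow zv
  split_ifs <;> simp [pderiv_X_of_ne]

lemma pd_inl_Urow (w : ℕ × ℕ) (i j : ℕ) : pderiv (Sum.inl w) (Urow i j) = 0 := by
  unfold Urow uv
  split_ifs <;> simp [pderiv_X_of_ne]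

lemma pd_inl_Uext (w : ℕ × ℕ) (n i j : ℕ) : pderiv (Sum.inl w) (UextRow n i j) = 0 := by
  unfold UextRow
  split_ifs <;> simp [pd_inl_Urow]

lemma pd_Zrow_ne (n i j : ℕ) (h : ¬(i = 1 ∧ j = n + 1)) :
    pderiv (Sum.inl (1, n + 1)) (Zrow i j) = 0 := by
  unfold Zrow zv
  split_ifs with h1 h2
  · exact pderiv_one
  · exact pderiv_X_of_ne (by simp [Prod.ext_iff]; omega)
  · exact map_zero _

lemma pd_Zrow_one (n j : ℕ) (hn : 1 ≤ n) :
    pderiv (Sum.inl (1, n + 1)) (Zrow 1 j) = if j = n + 1 then 1 else 0 := by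
  unfold Zrow zv
  rcases eq_or_ne j (n + 1) with rfl | hj
  · rw [if_neg (by omega), if_pos (by omega), if_pos rfl, pderiv_X_self]
  · rw [if_neg hj]
    split_ifs with h1 h2 <;>
      simp [pderiv_X_of_ne (show Sum.inl (1, j) ≠ Sum.inl (1, n+1) by simp [Prod.ext_iff]; omega)]

lemma pd_Urow_ne (k l i j : ℕ) (h : ¬(i = k ∧ j = l)) :
    pderiv (Sum.inr (k, l)) (Urow i j) = 0 := by
  unfold Urow uv
  split_ifs with h1 h2
  · exact pderiv_one
  · exact pderiv_X_of_ne (by simp [Prod.ext_iff]; omega)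
  · exact map_zero _

lemma pd_Urow_one (l j : ℕ) (hl : 1 < l) :
    pderiv (Sum.inr (1, l)) (Urow 1 j) = if j = l then 1 else 0 := by
  unfold Urow uv
  rcases eq_or_ne j l with rfl | hj
  · rw [if_neg (by omega), if_pos (by omega), if_pos rfl, pderiv_X_self]
  · rw [if_neg hj]
    split_ifs with h1 h2 <;>
      simp [pderiv_X_of_ne (show Sum.inr (1, j) ≠ Sum.inr (1, l) by simp [Prod.ext_iff]; omega)]

lemma Zrow_self (i : ℕ) : Zrow i i = 1 := by simp [Zrow]
lemma Zrow_lo {i j : ℕ} (h : j < i) : Zrow i j = 0 := by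
  unfold Zrow; rw [if_neg (by omega), if_neg (by omega)]
lemma Urow_self (i : ℕ) : Urow i i = 1 := by simp [Urow]
lemma Urow_lo {i j : ℕ} (h : j < i) : Urow i j = 0 := by
  unfold Urow; rw [if_neg (by omega), if_neg (by omega)]

noncomputable def Mmat (n α : ℕ) : Matrix (Fin n) (Fin n) Pzu :=
  Matrix.of fun a b => if (a : ℕ) + 2 ≤ n + 1 - α then Zrow ((a : ℕ) + 2) ((b : ℕ) + 1)
    else Urow ((a : ℕ) + 2 - (n + 1 - α)) ((b : ℕ) + 1)

lemma auxA (n α : ℕ) (h1 : 1 ≤ α) (h2 : α ≤ n) :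
    pderiv (Sum.inl (1, n + 1)) (Phi n α) = (-1 : Pzu) ^ n * (Mmat n α).det := by
  rw [Phi, pderiv_det_row]
  rw [Finset.sum_eq_single (0 : Fin (n + 1))]
  · have hrow : (fun j : Fin (n + 1) => pderiv (Sum.inl (1, n + 1))
        ((Matrix.of fun a b : Fin (n + 1) =>
          if (a : ℕ) + 1 ≤ n + 1 - α then Zrow ((a : ℕ) + 1) ((b : ℕ) + 1)
          else UextRow n ((a : ℕ) + 1 - (n + 1 - α)) ((b : ℕ) + 1)) 0 j))
        = fun j : Fin (n + 1) => if (j : ℕ) = n then (1 : Pzu) else 0 := by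
      funext j
      rw [Matrix.of_apply, if_pos (by simp only [Fin.val_zero]; omega)]
      simp only [Fin.val_zero]
      rw [pd_Zrow_one n _ (by omega)]
      exact if_congr (by omega) rfl rfl
    rw [hrow, Matrix.det_succ_row_zero, Finset.sum_eq_single (Fin.last n)]
    · rw [Matrix.updateRow_self]
      have hsub : ((Matrix.of fun a b : Fin (n + 1) =>
          if (a : ℕ) + 1 ≤ n + 1 - α then Zrow ((a : ℕ) + 1) ((b : ℕ) + 1)
          else UextRow n ((a : ℕ) + 1 - (n + 1 - α)) ((b : ℕ) + 1)).updateRow 0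
            fun j : Fin (n + 1) => if (j : ℕ) = n then (1 : Pzu) else 0).submatrix
            Fin.succ (Fin.last n).succAbove = Mmat n α := by
        rw [Fin.succAbove_last]
        ext a b
        rw [Matrix.submatrix_apply, Matrix.updateRow_ne (Fin.succ_ne_zero a)]
        simp only [Matrix.of_apply, Fin.val_succ, Fin.coe_castSucc, Mmat]
        have hb : (b : ℕ) + 1 ≤ n := b.isLt
        split_ifs with h
        · rfl
        · unfold UextRow; rw [if_pos hb]
      rw [hsub]
      simp [Fin.val_last]
    · intro j _ hj
      have : ((j : ℕ) = n) = False := by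
        simp only [eq_iff_iff, iff_false]
        intro h; exact hj (Fin.ext (by simp [Fin.val_last, h]))
      rw [Matrix.updateRow_self]
      simp [this]
    · intro h; exact absurd (Finset.mem_univ _) h
  · intro i _ hi
    refine Matrix.det_eq_zero_of_row_eq_zero i fun j => ?_
    rw [Matrix.updateRow_self]
    simp only [Matrix.of_apply]
    split_ifs with h
    · exact pd_Zrow_ne n _ _ (by
        have : (i : ℕ) ≠ 0 := fun hc => hi (Fin.ext hc)
        omega)
    · exact pd_inl_Uext _ n _ _
  · intro h; exact absurd (Finset.mem_univ _) h

lemma detMmat_one (m : ℕ) : (Mmat (m + 1) 1).det = (-1 : Pzu) ^ m := by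
  rw [Matrix.det_succ_column_zero, Finset.sum_eq_single (Fin.last m)]
  · have h1 : (Mmat (m + 1) 1) (Fin.last m) 0 = 1 := by
      simp only [Mmat, Matrix.of_apply, Fin.val_last, Fin.val_zero]
      rw [if_neg (by omega)]
      have h : m + 2 - (m + 1 + 1 - 1) = 1 := by omega
      rw [h]
      exact Urow_self 1
    have h2 : (((Mmat (m + 1) 1)).submatrix (Fin.last m).succAbove Fin.succ).det = 1 := by
      rw [Fin.succAbove_last]
      rw [Matrix.det_of_upperTriangular (by
        intro i j hij
        simp only [Matrix.submatrix_apply, Mmat, Matrix.of_apply, Fin.coe_castSucc, Fin.val_succ]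
        rw [if_pos (by have := i.isLt; omega)]
        exact Zrow_lo (by exact_mod_cast Nat.add_lt_add_right hij 2))]
      refine Finset.prod_eq_one fun i _ => ?_
      simp only [Matrix.submatrix_apply, Mmat, Matrix.of_apply, Fin.coe_castSucc, Fin.val_succ]
      rw [if_pos (by have := i.isLt; omega)]
      exact Zrow_self _
    rw [h1, h2, Fin.val_last]
    ring
  · intro a _ ha
    have h0 : (Mmat (m + 1) 1) a 0 = 0 := by
      simp only [Mmat, Matrix.of_apply, Fin.val_zero]
      have hav : (a : ℕ) < m := by
        rcases lt_or_eq_of_le (Nat.lt_succ_iff.mp a.isLt) with h | h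
        · exact h
        · exact absurd (Fin.ext h) ha
      rw [if_pos (by omega)]
      exact Zrow_lo (by omega)
    rw [h0]
    ring
  · intro h; exact absurd (Finset.mem_univ _) h

lemma auxR (n α : ℕ) (h2 : 2 ≤ α) (hα : α ≤ n) :
    Ru n 1 α (Psi n (α - 1)) =
      ((Matrix.of fun a b : Fin n =>
        if (a : ℕ) + 1 ≤ n - (α - 1) then Zrow ((a : ℕ) + 1) ((b : ℕ) + 1)
        else Urow ((a : ℕ) + 1 - (n - (α - 1))) ((b : ℕ) + 1)).updateRow
        ⟨n - α + 1, by omega⟩ (fun b => Urow α ((b : ℕ) + 1))).det := by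
  set P : Matrix (Fin n) (Fin n) Pzu := Matrix.of fun a b : Fin n =>
        if (a : ℕ) + 1 ≤ n - (α - 1) then Zrow ((a : ℕ) + 1) ((b : ℕ) + 1)
        else Urow ((a : ℕ) + 1 - (n - (α - 1))) ((b : ℕ) + 1) with hP
  set r : Fin n := ⟨n - α + 1, by omega⟩ with hr
  have hrv : (r : ℕ) = n - α + 1 := rfl
  have hpd : ∀ j : ℕ, α ≤ j → j ≤ n → pderiv (Sum.inr (1, j)) (Psi n (α - 1)) =
      (P.updateRow r (fun b => if (b : ℕ) + 1 = j then (1 : Pzu) else 0)).det := by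
    intro j hj1 hj2
    rw [Psi, pderiv_det_row, Finset.sum_eq_single r]
    · congr 1
      funext b
      by_cases hbr : b = r
      · subst hbr
        rw [Matrix.updateRow_self, Matrix.updateRow_self]
        funext c
        simp only [Matrix.of_apply]
        rw [if_neg (by omega), show n - α + 1 + 1 - (n - (α - 1)) = 1 by omega,
          pd_Urow_one j _ (by omega)]
      · rw [Matrix.updateRow_ne hbr, Matrix.updateRow_ne hbr]
    · intro a _ ha
      refine Matrix.det_eq_zero_of_row_eq_zero a fun b => ?_
      rw [Matrix.updateRow_self]
      simp only [Matrix.of_apply]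
      split_ifs with h
      · exact pd_inr_Zrow _ _ _
      · refine pd_Urow_ne _ _ _ _ ?_
        have hv : (a : ℕ) ≠ n - α + 1 := fun hc => ha (Fin.ext (by rw [hc, hrv]))
        omega
    · intro h; exact absurd (Finset.mem_univ _) h
  rw [Ru, hpd α le_rfl hα]
  have hsum : ∀ j ∈ Finset.Icc (α + 1) n,
      uv α j * pderiv (Sum.inr (1, j)) (Psi n (α - 1)) =
        (P.updateRow r (fun b => uv α j * (if (b : ℕ) + 1 = j then (1 : Pzu) else 0))).det := by
    intro j hj
    rw [Finset.mem_Icc] at hj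
    rw [hpd j (by omega) hj.2]
    rw [show (fun b : Fin n => uv α j * (if (b : ℕ) + 1 = j then (1 : Pzu) else 0))
      = uv α j • (fun b : Fin n => if (b : ℕ) + 1 = j then (1 : Pzu) else 0) from rfl]
    rw [Matrix.det_updateRow_smul]
  rw [Finset.sum_congr rfl hsum, ← det_updateRow_sum', ← Matrix.det_updateRow_add]
  refine congrArg Matrix.det (congrArg (P.updateRow r) ?_)
  funext b
  have hb : (b : ℕ) < n := b.isLt
  have hcollapse : ∑ j ∈ Finset.Icc (α + 1) n,
      uv α j * (if (b : ℕ) + 1 = j then (1 : Pzu) else 0)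
      = if (b : ℕ) + 1 ∈ Finset.Icc (α + 1) n then uv α ((b : ℕ) + 1) else 0 := by
    rw [Finset.sum_congr rfl (fun j _ => show uv α j * (if (b : ℕ) + 1 = j then (1 : Pzu) else 0)
      = if j = (b : ℕ) + 1 then uv α j else 0 by
        rcases eq_or_ne ((b : ℕ) + 1) j with h | h
        · simp [h]
        · simp [h, Ne.symm h]),
      Finset.sum_ite_eq' (Finset.Icc (α + 1) n) ((b : ℕ) + 1) (fun j => uv α j)]
  simp only [Pi.add_apply]
  rw [hcollapse]
  simp only [Finset.mem_Icc]
  unfold Urow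
  rcases Nat.lt_trichotomy ((b : ℕ) + 1) α with h | h | h
  · rw [if_neg (by omega), if_neg (by omega), if_neg (by omega), if_neg (by omega), add_zero]
  · rw [if_pos h, if_neg (by omega), if_pos (by omega), add_zero]
  · rw [if_neg (by omega), if_pos (by omega), if_neg (by omega), if_pos (by omega), zero_add]

lemma coe_succAbove {k : ℕ} (p : Fin (k + 1)) (c : Fin k) :
    ((p.succAbove c : Fin (k + 1)) : ℕ) =
      if (c : ℕ) < (p : ℕ) then (c : ℕ) else (c : ℕ) + 1 := by
  rw [Fin.succAbove]
  by_cases hc : (c : ℕ) < (p : ℕ)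
  · rw [if_pos (by simpa [Fin.lt_def] using hc), if_pos hc, Fin.coe_castSucc]
  · rw [if_neg (by simpa [Fin.lt_def] using hc), if_neg hc, Fin.val_succ]

lemma neg_one_pow_mod (a b : ℕ) (h : a % 2 = b % 2) : (-1 : Pzu) ^ a = (-1 : Pzu) ^ b := by
  have key : ∀ c : ℕ, (-1 : Pzu) ^ c = (-1 : Pzu) ^ (c % 2) := by
    intro c
    conv_lhs => rw [← Nat.div_add_mod c 2]
    rw [pow_add, pow_mul, neg_one_sq, one_pow, one_mul]
  rw [key a, key b, h]

lemma sigma_exists (k α : ℕ) (h2 : 2 ≤ α) (hα : α ≤ k + 2) :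
    ∃ σ : Equiv.Perm (Fin (k + 1)),
      (∀ a : Fin (k + 1), (σ a : ℕ) =
        if (a : ℕ) < k + 2 - α then (a : ℕ)
        else if (a : ℕ) = k + 2 - α then k else (a : ℕ) - 1) ∧
      ∀ A : Matrix (Fin (k + 1)) (Fin (k + 1)) Pzu,
        (A.submatrix σ id).det = (-1 : Pzu) ^ (α - 2) * A.det := by
  set j' : Fin (k + 1) := ⟨α - 2, by omega⟩ with hj'
  set σ : Equiv.Perm (Fin (k + 1)) := Fin.revPerm.trans (j'.cycleRange.trans Fin.revPerm)
    with hσdef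
  have hσapp : ∀ a : Fin (k + 1), σ a = Fin.rev (j'.cycleRange a.rev) := fun a => rfl
  have hsign : Equiv.Perm.sign σ = (-1 : ℤˣ) ^ (α - 2) := by
    have hσm : σ = (Fin.revPerm * j'.cycleRange) * Fin.revPerm := rfl
    rw [hσm, _root_.map_mul, _root_.map_mul, Fin.sign_cycleRange,
      show ((j' : Fin (k + 1)) : ℕ) = α - 2 from rfl]
    rcases Int.units_eq_one_or (Equiv.Perm.sign (Fin.revPerm : Equiv.Perm (Fin (k + 1))))
      with hs | hs <;> rw [hs] <;> simp
  refine ⟨σ, fun a => ?_, fun A => ?_⟩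
  · have hak : (a : ℕ) ≤ k := by omega
    rcases Nat.lt_trichotomy ((a : ℕ)) (k + 2 - α) with h | h | h
    · have hgt : j' < a.rev := by
        rw [Fin.lt_def, Fin.val_rev]
        show α - 2 < k + 1 - ((a : ℕ) + 1)
        omega
      rw [hσapp, Fin.cycleRange_of_gt hgt, Fin.rev_rev, if_pos h]
    · have hrevj : a.rev = j' := by
        refine Fin.ext ?_
        rw [Fin.val_rev]
        show k + 1 - ((a : ℕ) + 1) = α - 2
        omega
      rw [hσapp, hrevj, Fin.cycleRange_self, if_neg (by omega), if_pos h, Fin.val_rev,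
        Fin.val_zero]
      omega
    · have hlt : a.rev < j' := by
        rw [Fin.lt_def, Fin.val_rev]
        show k + 1 - ((a : ℕ) + 1) < α - 2
        omega
      rw [hσapp, if_neg (by omega), if_neg (by omega), Fin.val_rev,
        Fin.coe_cycleRange_of_lt hlt, Fin.val_rev]
      omega
  · rw [Matrix.det_permute, hsign]
    norm_cast

set_option maxHeartbeats 1000000 in
lemma mainEq (n α : ℕ) (h2 : 2 ≤ α) (hα : α ≤ n) :
    (-1 : Pzu) ^ n * (Mmat n α).det =
      ((Matrix.of fun a b : Fin n =>
        if (a : ℕ) + 1 ≤ n - (α - 1) then Zrow ((a : ℕ) + 1) ((b : ℕ) + 1)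
        else Urow ((a : ℕ) + 1 - (n - (α - 1))) ((b : ℕ) + 1)).updateRow
        ⟨n - α + 1, by omega⟩ (fun b => Urow α ((b : ℕ) + 1))).det := by
  obtain ⟨k, rfl⟩ : ∃ k, n = k + 2 := ⟨n - 2, by omega⟩
  set p : Fin (k + 2) := ⟨k + 2 - α, by omega⟩ with hp
  have hpv : (p : ℕ) = k + 2 - α := rfl
  set r : Fin (k + 2) := (⟨k + 2 - α + 1, by omega⟩ : Fin (k + 2)) with hrdef
  have hrv : (r : ℕ) = k + 2 - α + 1 := rfl
  set P : Matrix (Fin (k + 2)) (Fin (k + 2)) Pzu := Matrix.of fun a b : Fin (k + 2) =>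
        if (a : ℕ) + 1 ≤ k + 2 - (α - 1) then Zrow ((a : ℕ) + 1) ((b : ℕ) + 1)
        else Urow ((a : ℕ) + 1 - (k + 2 - (α - 1))) ((b : ℕ) + 1) with hPdef
  set w : Fin (k + 2) → Pzu := fun b => Urow α ((b : ℕ) + 1) with hwdef
  set M₁ : Matrix (Fin (k + 1)) (Fin (k + 1)) Pzu :=
    (Mmat (k + 2) α).submatrix p.succAbove Fin.succ with hM₁
  -- Step A : expand Mmat along column 0
  have hA : (Mmat (k + 2) α).det = (-1 : Pzu) ^ (k + 2 - α) * M₁.det := by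
    rw [Matrix.det_succ_column_zero, Finset.sum_eq_single p]
    · have h1 : (Mmat (k + 2) α) p 0 = 1 := by
        simp only [Mmat, Matrix.of_apply, Fin.val_zero, hpv]
        rw [if_neg (by omega), show k + 2 - α + 2 - (k + 2 + 1 - α) = 1 by omega]
        exact Urow_self 1
      rw [h1, hpv, mul_one, hM₁]
    · intro a _ ha
      have hav : (a : ℕ) ≠ k + 2 - α := fun hc => ha (Fin.ext (by rw [hc, hpv]))
      have h0 : (Mmat (k + 2) α) a 0 = 0 := by
        simp only [Mmat, Matrix.of_apply, Fin.val_zero]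
        split_ifs with h
        · exact Zrow_lo (by omega)
        · exact Urow_lo (by omega)
      rw [h0]
      ring
    · intro h; exact absurd (Finset.mem_univ _) h
  -- Step B : expand the updated Psi-matrix along column 0
  have hB : ((P.updateRow r w).det)
      = ((P.updateRow r w).submatrix Fin.succ Fin.succ).det := by
    rw [Matrix.det_succ_column_zero, Finset.sum_eq_single (0 : Fin (k + 2))]
    · have h1 : (P.updateRow r w) 0 0 = 1 := by
        rw [Matrix.updateRow_ne (show (0 : Fin (k + 2)) ≠ r from
          fun hc => by have := congrArg Fin.val hc; rw [hrv] at this; simp at this)]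
        simp only [hPdef, Matrix.of_apply]
        rw [if_pos (by simp only [Fin.val_zero]; omega)]
        simp only [Fin.val_zero]
        exact Zrow_self 1
      rw [h1, Fin.succAbove_zero, Fin.val_zero, pow_zero, one_mul, one_mul]
    · intro a _ ha
      have hav : (a : ℕ) ≠ 0 := fun hc => ha (Fin.ext hc)
      have h0 : (P.updateRow r w) a 0 = 0 := by
        by_cases har : a = r
        · subst har
          rw [Matrix.updateRow_self]
          simp only [hwdef, Fin.val_zero]
          exact Urow_lo (by omega)
        · rw [Matrix.updateRow_ne har]
          have hav2 : (a : ℕ) ≠ k + 2 - α + 1 := fun hc => har (Fin.ext (by rw [hc, hrv]))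
          simp only [hPdef, Matrix.of_apply, Fin.val_zero]
          split_ifs with h
          · exact Zrow_lo (by omega)
          · exact Urow_lo (by omega)
      rw [h0]
      ring
    · intro h; exact absurd (Finset.mem_univ _) h
  obtain ⟨σ, hσv, hdetσ⟩ := sigma_exists k α h2 hα
  have hQ : (P.updateRow r w).submatrix Fin.succ Fin.succ = M₁.submatrix σ id := by
    ext a b
    have hak : (a : ℕ) ≤ k := by omega
    simp only [Matrix.submatrix_apply, id_eq, hM₁]
    rcases Nat.lt_trichotomy ((a : ℕ)) (k + 2 - α) with h | h | h
    · -- Z rows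
      have hval : ((p.succAbove (σ a)) : ℕ) = (a : ℕ) := by
        rw [coe_succAbove, hσv a, hpv]
        split_ifs <;> omega
      rw [Matrix.updateRow_ne (show Fin.succ a ≠ r from
        fun hc => by have := congrArg Fin.val hc; rw [Fin.val_succ, hrv] at this; omega)]
      simp only [hPdef, Mmat, Matrix.of_apply, Fin.val_succ, hval]
      rw [if_pos (by omega), if_pos (by omega), show (a : ℕ) + 1 + 1 = (a : ℕ) + 2 from rfl]
    · -- the moved U row
      have hval : ((p.succAbove (σ a)) : ℕ) = k + 1 := by
        rw [coe_succAbove, hσv a, hpv]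
        split_ifs <;> omega
      rw [show Fin.succ a = r from Fin.ext (by rw [Fin.val_succ, hrv, h]),
        Matrix.updateRow_self]
      simp only [hwdef, Mmat, Matrix.of_apply, Fin.val_succ, hval]
      rw [if_neg (by omega), show k + 1 + 2 - (k + 2 + 1 - α) = α by omega]
    · -- remaining U rows
      have hval : ((p.succAbove (σ a)) : ℕ) = (a : ℕ) := by
        rw [coe_succAbove, hσv a, hpv]
        split_ifs <;> omega
      rw [Matrix.updateRow_ne (show Fin.succ a ≠ r from
        fun hc => by have := congrArg Fin.val hc; rw [Fin.val_succ, hrv] at this; omega)]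
      simp only [hPdef, Mmat, Matrix.of_apply, Fin.val_succ, hval]
      rw [if_neg (by omega), if_neg (by omega),
        show (a : ℕ) + 1 + 1 - (k + 2 - (α - 1)) = (a : ℕ) + 2 - (k + 2 + 1 - α) by omega]
  rw [hA, hB, hQ, hdetσ, ← mul_assoc, ← pow_add]
  congr 1
  exact neg_one_pow_mod _ _ (by omega)

/-- `∂Φ_α/∂z_{1(n+1)} = R^u_{1α} Ψ_{α−1}` for `2 ≤ α ≤ n`, and
`∂Φ_1/∂z_{1(n+1)} = −1`. -/
theorem dPhi_dz_top_right (n : ℕ) (hn : 1 ≤ n) :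
    (∀ α : ℕ, 2 ≤ α → α ≤ n →
      pderiv (Sum.inl (1, n + 1)) (Phi n α) = Ru n 1 α (Psi n (α - 1))) ∧
    pderiv (Sum.inl (1, n + 1)) (Phi n 1) = -1 := by
  constructor
  · intro α hα2 hαn
    rw [auxA n α (by omega) hαn, auxR n α hα2 hαn]
    exact mainEq n α hα2 hαn
  · rw [auxA n 1 le_rfl hn]
    obtain ⟨m, rfl⟩ : ∃ m, n = m + 1 := ⟨n - 1, by omega⟩
    rw [detMmat_one, pow_succ]
    rw [show ((-1 : Pzu) ^ m * -1) * (-1) ^ m = ((-1) ^ m * (-1) ^ m) * -1 from by ring,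
      ← pow_add, Even.neg_one_pow ⟨m, rfl⟩, one_mul]
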